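/- Every f = h + conj(g) ∈ F_H^0 satisfies the growth upper bound |f(z)| ≤ |z| + |z|²/2 for all z ∈ 𝔻. -/

import Mathlib

open Metric

/-- Schwarz-type lemma for the sum of norms. -/
lemma schwarz_sum_aux
    (h g : ℂ → ℂ)
    (hh : DifferentiableOn ℂ h (ball (0:ℂ) 1))
    (hg : DifferentiableOn ℂ g (ball (0:ℂ) 1))
    (h1 : deriv h 0 = 1) (g1 : deriv g 0 = 0)
    (hineq : ∀ z ∈ ball (0:ℂ) 1, ‖deriv h z - 1‖ < 1 - ‖deriv g z‖) :
    ∀ w ∈ ball (0:ℂ) 1, ‖deriv h w - 1‖ + ‖deriv g w‖ ≤ ‖w‖ := by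
  have hp : DifferentiableOn ℂ (fun x => deriv h x - 1) (ball (0:ℂ) 1) :=
    ((hh.analyticOnNhd isOpen_ball).deriv.differentiableOn).sub (differentiableOn_const 1)
  have hq : DifferentiableOn ℂ (deriv g) (ball (0:ℂ) 1) :=
    (hg.analyticOnNhd isOpen_ball).deriv.differentiableOn
  intro w hw
  set a := deriv h w - 1 with ha
  set b := deriv g w with hb
  set c : ℂ := if a = 0 ∨ b = 0 then 1 else
    (a * (starRingEnd ℂ) b) / ((‖a‖ * ‖b‖ : ℝ) : ℂ) with hc
  have hcn : ‖c‖ = 1 := by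
    rw [hc]
    split_ifs with hab
    · simp
    · push_neg at hab
      rw [norm_div, norm_mul, RCLike.norm_conj, Complex.norm_real,
        Real.norm_eq_abs, abs_of_nonneg (by positivity)]
      field_simp [norm_ne_zero_iff.mpr hab.1, norm_ne_zero_iff.mpr hab.2]
  have hsum : ‖a + c * b‖ = ‖a‖ + ‖b‖ := by
    rw [hc]
    split_ifs with hab
    · rcases hab with h0 | h0 <;> simp [h0]
    · push_neg at hab
      have hbb : (starRingEnd ℂ) b * b = ((‖b‖ : ℝ) : ℂ)^2 := by
        rw [mul_comm, Complex.mul_conj']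
      have hane : ((‖a‖ : ℝ) : ℂ) ≠ 0 := by
        simpa using norm_ne_zero_iff.mpr hab.1
      have hbne : ((‖b‖ : ℝ) : ℂ) ≠ 0 := by
        simpa using norm_ne_zero_iff.mpr hab.2
      have key : a + a * (starRingEnd ℂ) b / ((‖a‖ * ‖b‖ : ℝ) : ℂ) * b
          = a * (((‖a‖ + ‖b‖ : ℝ) : ℂ) / (‖a‖ : ℝ)) := by
        rw [div_mul_eq_mul_div, mul_assoc, hbb]
        field_simp
        push_cast
        ring
      rw [key, norm_mul, norm_div, Complex.norm_real, Complex.norm_real,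
        Real.norm_eq_abs, Real.norm_eq_abs,
        abs_of_nonneg (by positivity), abs_of_nonneg (norm_nonneg a)]
      field_simp [norm_ne_zero_iff.mpr hab.1]
  -- Schwarz lemma applied to φ = p + c q
  set φ : ℂ → ℂ := fun x => (deriv h x - 1) + c * deriv g x with hφ
  have hφd : DifferentiableOn ℂ φ (ball (0:ℂ) 1) :=
    hp.add (hq.const_mul c)
  have hφ0 : φ 0 = 0 := by simp [hφ, h1, g1]
  have hmaps : Set.MapsTo φ (ball (0:ℂ) 1) (ball (0:ℂ) 1) := by
    intro x hx
    rw [mem_ball_zero_iff]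
    calc ‖φ x‖ ≤ ‖deriv h x - 1‖ + ‖c * deriv g x‖ := norm_add_le _ _
      _ = ‖deriv h x - 1‖ + ‖deriv g x‖ := by rw [norm_mul, hcn, one_mul]
      _ < 1 := by have := hineq x hx; linarith
  have hws : ‖w‖ < 1 := by
    simpa using mem_ball_zero_iff.mp hw
  have := Complex.norm_le_norm_of_mapsTo_ball hφd (hmaps.mono_right ball_subset_closedBall) hφ0 hws
  calc ‖a‖ + ‖b‖ = ‖a + c * b‖ := hsum.symm
    _ = ‖φ w‖ := by simp [hφ, ha, hb]
    _ ≤ ‖w‖ := this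
    _ = ‖w‖ := rfl

lemma integral_bound_aux
    (f : ℂ → ℂ) (z : ℂ)
    (hf : DifferentiableOn ℂ f (ball (0:ℂ) 1))
    (hz : z ∈ ball (0:ℂ) 1) (f0 : f 0 = 0) :
    f z = ∫ t in (0:ℝ)..1, deriv f ((t:ℂ) * z) * z := by
  have hr : ‖z‖ < 1 := mem_ball_zero_iff.mp hz
  have hpath : ∀ t ∈ Set.uIcc (0:ℝ) 1, ((t:ℂ) * z) ∈ ball (0:ℂ) 1 := by
    intro t ht
    rw [Set.uIcc_of_le (by norm_num)] at ht
    rw [mem_ball_zero_iff, norm_mul, Complex.norm_real, Real.norm_eq_abs,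
      abs_of_nonneg ht.1]
    calc t * ‖z‖ ≤ 1 * ‖z‖ := by nlinarith [norm_nonneg z, ht.2]
      _ < 1 := by simpa
  have hderiv : ∀ t ∈ Set.uIcc (0:ℝ) 1,
      HasDerivAt (fun s : ℝ => f ((s:ℂ) * z)) (deriv f ((t:ℂ) * z) * z) t := by
    intro t ht
    have hda : DifferentiableAt ℂ f ((t:ℂ) * z) :=
      hf.differentiableAt (isOpen_ball.mem_nhds (hpath t ht))
    have h1 : HasDerivAt f (deriv f ((t:ℂ) * z)) ((t:ℂ) * z) := hda.hasDerivAt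
    have h2 : HasDerivAt (fun s : ℝ => (s:ℂ) * z) z t := by
      have := (hasDerivAt_id t).smul_const z
      simpa [Complex.real_smul] using this
    have := (h1.hasFDerivAt.restrictScalars ℝ).comp_hasDerivAt t h2
    simpa [mul_comm, Function.comp_def] using this
  have hcont : ContinuousOn (fun t : ℝ => deriv f ((t:ℂ) * z) * z) (Set.uIcc (0:ℝ) 1) := by
    have hdc : ContinuousOn (deriv f) (ball (0:ℂ) 1) :=
      (hf.analyticOnNhd isOpen_ball).deriv.continuousOn
    exact ((hdc.comp (Continuous.continuousOn (by continuity)) hpath).mul continuousOn_const)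
  have := intervalIntegral.integral_eq_sub_of_hasDerivAt hderiv hcont.intervalIntegrable
  simpa [f0] using this.symm

theorem growth_upper_bound
    (h g : ℂ → ℂ)
    (hh : DifferentiableOn ℂ h (ball (0:ℂ) 1))
    (hg : DifferentiableOn ℂ g (ball (0:ℂ) 1))
    (h0 : h 0 = 0) (h1 : deriv h 0 = 1) (g0 : g 0 = 0) (g1 : deriv g 0 = 0)
    (hineq : ∀ z ∈ ball (0:ℂ) 1, ‖deriv h z - 1‖ < 1 - ‖deriv g z‖) :
    ∀ z ∈ ball (0:ℂ) 1,
      ‖h z + (starRingEnd ℂ) (g z)‖ ≤ ‖z‖ + ‖z‖ ^ 2 / 2 := by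
  intro z hz
  have hr : ‖z‖ < 1 := mem_ball_zero_iff.mp hz
  set r := ‖z‖ with hrdef
  have hr0 : 0 ≤ r := norm_nonneg z
  have hpath : ∀ t ∈ Set.Icc (0:ℝ) 1, ((t:ℂ) * z) ∈ ball (0:ℂ) 1 := by
    intro t ht
    rw [mem_ball_zero_iff, norm_mul, Complex.norm_real, Real.norm_eq_abs,
      abs_of_nonneg ht.1]
    calc t * ‖z‖ ≤ 1 * ‖z‖ := by nlinarith [ht.2]
      _ < 1 := by simpa
  have hhz := integral_bound_aux h z hh hz h0
  have hgz := integral_bound_aux g z hg hz g0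
  have hschwarz := schwarz_sum_aux h g hh hg h1 g1 hineq
  -- continuity of integrands on [0,1]
  have hcontpath : Continuous (fun t : ℝ => (t:ℂ) * z) := by continuity
  have hdch : ContinuousOn (fun t : ℝ => ‖deriv h ((t:ℂ) * z) * z‖) (Set.Icc (0:ℝ) 1) :=
    (((hh.analyticOnNhd isOpen_ball).deriv.continuousOn.comp
      hcontpath.continuousOn hpath).mul continuousOn_const).norm
  have hdcg : ContinuousOn (fun t : ℝ => ‖deriv g ((t:ℂ) * z) * z‖) (Set.Icc (0:ℝ) 1) :=
    (((hg.analyticOnNhd isOpen_ball).deriv.continuousOn.comp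
      hcontpath.continuousOn hpath).mul continuousOn_const).norm
  have hih : IntervalIntegrable (fun t : ℝ => ‖deriv h ((t:ℂ) * z) * z‖)
      MeasureTheory.volume 0 1 := hdch.intervalIntegrable_of_Icc (by norm_num)
  have hig : IntervalIntegrable (fun t : ℝ => ‖deriv g ((t:ℂ) * z) * z‖)
      MeasureTheory.volume 0 1 := hdcg.intervalIntegrable_of_Icc (by norm_num)
  have hibound : IntervalIntegrable (fun t : ℝ => (1 + t * r) * r)
      MeasureTheory.volume 0 1 := (Continuous.intervalIntegrable (by continuity) 0 1)
  have hnorm1 : ‖h z‖ ≤ ∫ t in (0:ℝ)..1, ‖deriv h ((t:ℂ) * z) * z‖ := by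
    rw [hhz]
    exact intervalIntegral.norm_integral_le_integral_norm (by norm_num)
  have hnorm2 : ‖g z‖ ≤ ∫ t in (0:ℝ)..1, ‖deriv g ((t:ℂ) * z) * z‖ := by
    rw [hgz]
    exact intervalIntegral.norm_integral_le_integral_norm (by norm_num)
  have hsumint : (∫ t in (0:ℝ)..1, ‖deriv h ((t:ℂ) * z) * z‖)
      + (∫ t in (0:ℝ)..1, ‖deriv g ((t:ℂ) * z) * z‖)
      = ∫ t in (0:ℝ)..1, (‖deriv h ((t:ℂ) * z) * z‖ + ‖deriv g ((t:ℂ) * z) * z‖) :=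
    (intervalIntegral.integral_add hih hig).symm
  have hmono : (∫ t in (0:ℝ)..1, (‖deriv h ((t:ℂ) * z) * z‖ + ‖deriv g ((t:ℂ) * z) * z‖))
      ≤ ∫ t in (0:ℝ)..1, (1 + t * r) * r := by
    apply intervalIntegral.integral_mono_on (by norm_num) (hih.add hig) hibound
    intro t ht
    have hmem := hpath t ht
    have hs := hschwarz _ hmem
    have htz : ‖(t:ℂ) * z‖ = t * r := by
      rw [norm_mul, Complex.norm_real, Real.norm_eq_abs, abs_of_nonneg ht.1]
    have hhd : ‖deriv h ((t:ℂ) * z)‖ ≤ 1 + ‖deriv h ((t:ℂ) * z) - 1‖ := by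
      calc ‖deriv h ((t:ℂ) * z)‖ = ‖1 + (deriv h ((t:ℂ) * z) - 1)‖ := by ring_nf
        _ ≤ ‖(1:ℂ)‖ + ‖deriv h ((t:ℂ) * z) - 1‖ := norm_add_le _ _
        _ = 1 + ‖deriv h ((t:ℂ) * z) - 1‖ := by norm_num
    rw [htz] at hs
    rw [norm_mul, norm_mul]
    calc ‖deriv h ((t:ℂ) * z)‖ * ‖z‖ + ‖deriv g ((t:ℂ) * z)‖ * ‖z‖
        = (‖deriv h ((t:ℂ) * z)‖ + ‖deriv g ((t:ℂ) * z)‖) * r := by ring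
      _ ≤ (1 + t * r) * r := by nlinarith
  have hval : (∫ t in (0:ℝ)..1, (1 + t * r) * r) = r + r ^ 2 / 2 := by
    have : (fun t : ℝ => (1 + t * r) * r) = fun t : ℝ => r + t * (r * r) := by
      funext t; ring
    rw [this, intervalIntegral.integral_add (intervalIntegrable_const)
      ((intervalIntegral.intervalIntegrable_id).mul_const _)]
    simp [intervalIntegral.integral_mul_const, integral_id]
    ring
  calc ‖h z + (starRingEnd ℂ) (g z)‖ ≤ ‖h z‖ + ‖(starRingEnd ℂ) (g z)‖ := norm_add_le _ _
    _ = ‖h z‖ + ‖g z‖ := by rw [RCLike.norm_conj]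
    _ ≤ (∫ t in (0:ℝ)..1, ‖deriv h ((t:ℂ) * z) * z‖)
        + (∫ t in (0:ℝ)..1, ‖deriv g ((t:ℂ) * z) * z‖) := add_le_add hnorm1 hnorm2
    _ = _ := hsumint
    _ ≤ ∫ t in (0:ℝ)..1, (1 + t * r) * r := hmono
    _ = r + r ^ 2 / 2 := hval
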